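/- Let a < b, let s ∈ (0,1), let g : [a,b] → [0,∞) be an s-convex (in the second sense) Lebesgue integrable function, and let f : [a,b] → [0,∞) be a Lebesgue integrable (g,s)-convex dominated function. Then |(f(a) + f(b))/(s+1) − (1/(b−a)) ∫_a^b f(x) dx| ≤ (g(a) + g(b))/(s+1) − (1/(b−a)) ∫_a^b g(x) dx. -/

import Mathlib

open MeasureTheory Set

theorem stmt14 (a b : ℝ) (hab : a < b) (s : ℝ) (hs : s ∈ Set.Ioo (0:ℝ) 1)
    (f g : ℝ → ℝ)
    (hg0 : ∀ x ∈ Set.Icc a b, 0 ≤ g x)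
    (hgconv : ∀ x ∈ Set.Icc a b, ∀ y ∈ Set.Icc a b, ∀ t ∈ Set.Ioo (0:ℝ) 1,
      g (t * x + (1 - t) * y) ≤ t ^ s * g x + (1 - t) ^ s * g y)
    (hgint : IntegrableOn g (Set.Icc a b))
    (hf0 : ∀ x ∈ Set.Icc a b, 0 ≤ f x)
    (hfint : IntegrableOn f (Set.Icc a b))
    (hfdom : ∀ x ∈ Set.Icc a b, ∀ y ∈ Set.Icc a b, ∀ t ∈ Set.Ioo (0:ℝ) 1,
      |t ^ s * f x + (1 - t) ^ s * f y - f (t * x + (1 - t) * y)| ≤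
        t ^ s * g x + (1 - t) ^ s * g y - g (t * x + (1 - t) * y)) :
    |(f a + f b) / (s + 1) - (1 / (b - a)) * ∫ x in a..b, f x| ≤
      (g a + g b) / (s + 1) - (1 / (b - a)) * ∫ x in a..b, g x := by
  have hne : a - b ≠ 0 := sub_ne_zero.mpr hab.ne
  -- basic integrability facts
  have hrpow : IntervalIntegrable (fun t : ℝ => t ^ s) volume 0 1 :=
    intervalIntegral.intervalIntegrable_rpow (Or.inl hs.1.le)
  have hrpow1 : IntervalIntegrable (fun t : ℝ => (1 - t) ^ s) volume 0 1 := by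
    simpa using (hrpow.comp_sub_left 1).symm
  have hts : ∫ t in (0:ℝ)..1, t ^ s = 1 / (s + 1) := by
    rw [integral_rpow (Or.inl (by linarith [hs.1]))]
    rw [Real.one_rpow, Real.zero_rpow (by linarith [hs.1])]; ring
  have h1ts : ∫ t in (0:ℝ)..1, (1 - t) ^ s = 1 / (s + 1) := by
    have := intervalIntegral.integral_comp_sub_left (a := (0:ℝ)) (b := 1)
      (fun x => x ^ s) 1
    simpa [hts] using this
  have compInt : ∀ h : ℝ → ℝ, IntegrableOn h (Set.Icc a b) →
      IntervalIntegrable (fun t => h (t * a + (1 - t) * b)) volume 0 1 := by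
    intro h hint
    have hI : IntervalIntegrable h volume a b := by
      rw [intervalIntegrable_iff_integrableOn_Icc_of_le hab.le]; exact hint
    have h2 := (hI.comp_add_right b).comp_mul_left (c := a - b)
    have h3 : IntervalIntegrable (fun t => h ((a - b) * t + b)) volume 0 1 := by
      simpa [div_self hne] using h2.symm
    have : (fun t => h (t * a + (1 - t) * b)) = fun t => h ((a - b) * t + b) := by
      funext t; congr 1; ring
    rw [this]; exact h3
  have compVal : ∀ h : ℝ → ℝ,
      ∫ t in (0:ℝ)..1, h (t * a + (1 - t) * b) = (1 / (b - a)) * ∫ x in a..b, h x := by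
    intro h
    have heq : (fun t => h (t * a + (1 - t) * b)) = fun t => h ((a - b) * t + b) := by
      funext t; congr 1; ring
    rw [heq, intervalIntegral.integral_comp_mul_add h hne b]
    have h0 : (a - b) * 0 + b = b := by ring
    have h1 : (a - b) * 1 + b = a := by ring
    rw [h0, h1, intervalIntegral.integral_symm, smul_eq_mul]
    rw [show b - a = -(a - b) by ring, one_div, inv_neg]
    ring
  -- the key functions
  set F : ℝ → ℝ := fun t => t ^ s * f a + (1 - t) ^ s * f b - f (t * a + (1 - t) * b)
    with hF
  set G : ℝ → ℝ := fun t => t ^ s * g a + (1 - t) ^ s * g b - g (t * a + (1 - t) * b)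
    with hG
  have hFint : IntervalIntegrable F volume 0 1 :=
    ((hrpow.mul_const (f a)).add (hrpow1.mul_const (f b))).sub (compInt f hfint)
  have hGint : IntervalIntegrable G volume 0 1 :=
    ((hrpow.mul_const (g a)).add (hrpow1.mul_const (g b))).sub (compInt g hgint)
  have ha : a ∈ Set.Icc a b := Set.left_mem_Icc.mpr hab.le
  have hb : b ∈ Set.Icc a b := Set.right_mem_Icc.mpr hab.le
  -- pointwise bound on [0,1]
  have hpt : ∀ t ∈ Set.Icc (0:ℝ) 1, |F t| ≤ G t := by
    intro t ht
    rcases eq_or_lt_of_le ht.1 with h0 | h0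
    · simp [hF, hG, ← h0, Real.zero_rpow (ne_of_gt hs.1), Real.one_rpow]
    rcases eq_or_lt_of_le ht.2 with h1 | h1
    · simp [hF, hG, h1, Real.zero_rpow (ne_of_gt hs.1), Real.one_rpow]
    exact hfdom a ha b hb t ⟨h0, h1⟩
  -- integrate
  have key : |∫ t in (0:ℝ)..1, F t| ≤ ∫ t in (0:ℝ)..1, G t := by
    calc |∫ t in (0:ℝ)..1, F t| ≤ ∫ t in (0:ℝ)..1, |F t| :=
          intervalIntegral.abs_integral_le_integral_abs zero_le_one
    _ ≤ ∫ t in (0:ℝ)..1, G t :=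
          intervalIntegral.integral_mono_on zero_le_one hFint.abs hGint hpt
  -- compute the two integrals
  have hval : ∀ h : ℝ → ℝ, IntegrableOn h (Set.Icc a b) →
      ∫ t in (0:ℝ)..1,
          (t ^ s * h a + (1 - t) ^ s * h b - h (t * a + (1 - t) * b)) =
        (h a + h b) / (s + 1) - (1 / (b - a)) * ∫ x in a..b, h x := by
    intro h hint
    rw [intervalIntegral.integral_sub
        ((hrpow.mul_const (h a)).add (hrpow1.mul_const (h b))) (compInt h hint),
      intervalIntegral.integral_add (hrpow.mul_const (h a)) (hrpow1.mul_const (h b)),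
      intervalIntegral.integral_mul_const, intervalIntegral.integral_mul_const,
      hts, h1ts, compVal h]
    ring
  rw [← hval f hfint, ← hval g hgint]
  exact key
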